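/- arXiv:2212.09838 — 2 statements merged into one kernel-verified Lean document; each statement's English description precedes it below -/
import Mathlib

section
/- For any real numbers $\mu > 0$ and $\chi > 0$, the infimum of the function $\beta \mapsto \mu \beta \big(1 + \frac{(\chi - \beta)^2}{4\beta}\big)$ over $\beta \in (0, \chi)$ equals $\frac{\mu \chi^2}{4}$ if $0 < \chi < 2$, and equals $\mu(\chi - 1)$ if $\chi \geq 2$. -/
/-- The infimum of `β ↦ μ β (1 + (χ-β)²/(4β))` over `β ∈ (0,χ)` equals `μχ²/4`
if `0 < χ < 2` and `μ(χ-1)` if `χ ≥ 2`. -/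
theorem stmt0 (μ χ : ℝ) (hμ : 0 < μ) (hχ : 0 < χ) :
    sInf {y : ℝ | ∃ β : ℝ, 0 < β ∧ β < χ ∧ y = μ * β * (1 + (χ - β) ^ 2 / (4 * β))} =
      if χ < 2 then μ * χ ^ 2 / 4 else μ * (χ - 1) := by
  have key : ∀ β : ℝ, 0 < β →
      μ * β * (1 + (χ - β) ^ 2 / (4 * β)) = μ * (4 * β + (χ - β) ^ 2) / 4 := by
    intro β hβ
    field_simp
  apply csInf_eq_of_forall_ge_of_forall_gt_exists_lt
  · exact ⟨_, ⟨χ / 2, by positivity, by linarith, rfl⟩⟩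
  · rintro a ⟨β, hβ0, hβχ, rfl⟩
    rw [key β hβ0]
    split_ifs with h
    · nlinarith [mul_nonneg hμ.le (mul_nonneg hβ0.le (by linarith : (0:ℝ) ≤ β + 4 - 2 * χ))]
    · nlinarith [mul_nonneg hμ.le (sq_nonneg (β - (χ - 2)))]
  · intro w hw
    rcases lt_or_ge 2 χ with h2 | h2
    · rw [if_neg (by linarith)] at hw
      refine ⟨_, ⟨χ - 2, by linarith, by linarith, rfl⟩, ?_⟩
      rw [key _ (by linarith)]
      nlinarith
    · have hb : (if χ < 2 then μ * χ ^ 2 / 4 else μ * (χ - 1)) = μ * χ ^ 2 / 4 := by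
        split_ifs with h
        · rfl
        · have : χ = 2 := le_antisymm h2 (le_of_not_gt h)
          rw [this]; ring
      rw [hb] at hw
      set ε := w - μ * χ ^ 2 / 4 with hε
      have hε0 : 0 < ε := by simp only [hε]; linarith
      set c := μ * (4 + χ) with hc
      have hc0 : 0 < c := by positivity
      set β := min (χ / 2) (2 * ε / c) with hβ
      have hβ0 : 0 < β := lt_min (by positivity) (by positivity)
      have hβχ : β < χ := lt_of_le_of_lt (min_le_left _ _) (by linarith)
      refine ⟨_, ⟨β, hβ0, hβχ, rfl⟩, ?_⟩
      rw [key _ hβ0]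
      have h1 : β * c ≤ 2 * ε := by
        have := min_le_right (χ / 2) (2 * ε / c)
        rw [le_div_iff₀ hc0] at this
        exact this
      have h2' : β ≤ χ / 2 := min_le_left _ _
      have h3 : μ * β * (β + 4 - 2 * χ) ≤ β * c := by
        have h4 : β + 4 - 2 * χ ≤ 4 + χ := by linarith
        nlinarith [mul_pos hμ hβ0]
      have hexp : μ * (4 * β + (χ - β) ^ 2) / 4 = μ * χ ^ 2 / 4 + μ * β * (β + 4 - 2 * χ) / 4 := by
        ring
      rw [hexp]
      have h5 : μ * β * (β + 4 - 2 * χ) ≤ 2 * ε := le_trans h3 h1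
      clear_value β ε c
      linarith
end

section
/- If $\chi_1 = \chi_2 = \chi > 0$ and $\mu > 0$, then $\inf\{ \mu(B+\beta)\big(1 + \frac{(|\chi - B| - \beta)^2}{4\beta}\big) : B > 0,\ \beta > 0,\ \beta \neq |\chi - B| \} = \inf\{ \mu\beta\big(1 + \frac{(\chi - \beta)^2}{4\beta}\big) : 0 < \beta < \chi \}$. -/
/-- In the equal-sensitivity case `χ₁ = χ₂ = χ`, the two-parameter infimum reduces to a
one-parameter infimum over `β ∈ (0,χ)`. -/
theorem stmt3 (μ χ : ℝ) (hμ : 0 < μ) (hχ : 0 < χ) :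
    sInf {y : ℝ | ∃ B β : ℝ, 0 < B ∧ 0 < β ∧ β ≠ |χ - B| ∧
        y = μ * (B + β) * (1 + (|χ - B| - β) ^ 2 / (4 * β))} =
      sInf {y : ℝ | ∃ β : ℝ, 0 < β ∧ β < χ ∧ y = μ * β * (1 + (χ - β) ^ 2 / (4 * β))} := by
  set S : Set ℝ := {y : ℝ | ∃ B β : ℝ, 0 < B ∧ 0 < β ∧ β ≠ |χ - B| ∧
        y = μ * (B + β) * (1 + (|χ - B| - β) ^ 2 / (4 * β))} with hSdef
  set T : Set ℝ := {y : ℝ | ∃ β : ℝ, 0 < β ∧ β < χ ∧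
        y = μ * β * (1 + (χ - β) ^ 2 / (4 * β))} with hTdef
  have hSne : S.Nonempty :=
    ⟨μ * (χ + 1) * (1 + (|χ - χ| - 1) ^ 2 / (4 * 1)), χ, 1, hχ, one_pos, by simp, rfl⟩
  have hTne : T.Nonempty := ⟨_, χ / 2, by linarith, by linarith, rfl⟩
  have hSbdd : BddBelow S := by
    refine ⟨0, fun y hy => ?_⟩
    obtain ⟨B, β, hB, hβ, -, rfl⟩ := hy
    have h1 : (0:ℝ) ≤ (|χ - B| - β) ^ 2 / (4 * β) := div_nonneg (sq_nonneg _) (by linarith)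
    have h2 : (0:ℝ) ≤ B + β := by linarith
    have h3 : (0:ℝ) ≤ 1 + (|χ - B| - β) ^ 2 / (4 * β) := by linarith
    exact mul_nonneg (mul_nonneg hμ.le h2) h3
  have hTbdd : BddBelow T := by
    refine ⟨0, fun y hy => ?_⟩
    obtain ⟨β, hβ, -, rfl⟩ := hy
    have h1 : (0:ℝ) ≤ (χ - β) ^ 2 / (4 * β) := div_nonneg (sq_nonneg _) (by linarith)
    have h3 : (0:ℝ) ≤ 1 + (χ - β) ^ 2 / (4 * β) := by linarith
    exact mul_nonneg (mul_nonneg hμ.le hβ.le) h3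
  -- Lemma A : sInf T ≤ μ * χ
  have hA : sInf T ≤ μ * χ := by
    rcases le_or_gt χ 4 with h4 | h4
    · have hmem : μ * (χ/2) * (1 + (χ - χ/2) ^ 2 / (4 * (χ/2))) ∈ T :=
        ⟨χ/2, by linarith, by linarith, rfl⟩
      refine (csInf_le hTbdd hmem).trans ?_
      have he : (χ - χ/2) ^ 2 / (4 * (χ/2)) = χ/8 := by
        rw [div_eq_iff (by linarith : (4:ℝ) * (χ/2) ≠ 0)]; ring
      rw [he]
      nlinarith [mul_nonneg (mul_nonneg hμ.le hχ.le) (show (0:ℝ) ≤ 8 - χ by linarith)]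
    · have hmem : μ * (χ-4) * (1 + (χ - (χ-4)) ^ 2 / (4 * (χ-4))) ∈ T :=
        ⟨χ-4, by linarith, by linarith, rfl⟩
      refine (csInf_le hTbdd hmem).trans ?_
      have he : (χ - (χ-4)) ^ 2 / (4 * (χ-4)) = 4/(χ-4) := by
        rw [div_eq_div_iff (by linarith) (by linarith)]; ring
      rw [he]
      have he2 : μ * (χ-4) * (1 + 4/(χ-4)) = μ * χ := by
        have h0 : χ - 4 ≠ 0 := ne_of_gt (by linarith)
        field_simp
        ring
      rw [he2]
  refine le_antisymm ?_ ?_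
  · -- sInf S ≤ sInf T, via approximation B → 0⁺
    refine le_csInf hTne ?_
    rintro t ⟨β, hβ0, hβχ, rfl⟩
    refine le_of_forall_pos_le_add ?_
    intro ε hε
    set C : ℝ := 1 + (χ - β) ^ 2 / (4 * β) with hCdef
    have hEnn : (0:ℝ) ≤ (χ - β) ^ 2 / (4 * β) := div_nonneg (sq_nonneg _) (by linarith)
    have hC : 0 < C := by rw [hCdef]; linarith
    have hμC : 0 < μ * C := mul_pos hμ hC
    set B : ℝ := min ((χ - β)/2) (ε/(μ*C)) with hBdef
    have hB0 : 0 < B := lt_min (by linarith) (div_pos hε hμC)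
    have hB1 : B ≤ (χ - β)/2 := min_le_left _ _
    have habs : |χ - B| = χ - B := abs_of_pos (by linarith)
    have hne : β ≠ |χ - B| := by rw [habs]; exact ne_of_lt (by linarith)
    have hmem : μ * (B + β) * (1 + (|χ - B| - β) ^ 2 / (4 * β)) ∈ S :=
      ⟨B, β, hB0, hβ0, hne, rfl⟩
    refine (csInf_le hSbdd hmem).trans ?_
    rw [habs]
    have hD : (χ - B - β) ^ 2 / (4 * β) ≤ (χ - β) ^ 2 / (4 * β) := by
      apply div_le_div_of_nonneg_right ?_ (by linarith)
      nlinarith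
    have hDnn : (0:ℝ) ≤ (χ - B - β) ^ 2 / (4 * β) := div_nonneg (sq_nonneg _) (by linarith)
    have hBε : μ * B * C ≤ ε := by
      have h2 : B ≤ ε/(μ*C) := min_le_right _ _
      calc μ * B * C = B * (μ * C) := by ring
        _ ≤ (ε/(μ*C)) * (μ*C) := mul_le_mul_of_nonneg_right h2 hμC.le
        _ = ε := div_mul_cancel₀ _ hμC.ne'
    have hprod := mul_le_mul_of_nonneg_left hD
      (show (0:ℝ) ≤ μ * (B + β) by positivity)
    rw [hCdef] at hBε ⊢
    nlinarith [hprod, hBε, hDnn, hEnn]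
  · -- sInf T ≤ sInf S
    refine le_csInf hSne ?_
    rintro s ⟨B, β, hB, hβ, hne, rfl⟩
    rcases le_or_gt χ B with hBc | hBc
    · refine hA.trans ?_
      have hfac : (0:ℝ) ≤ (|χ - B| - β) ^ 2 / (4 * β) := div_nonneg (sq_nonneg _) (by linarith)
      nlinarith [mul_nonneg (mul_nonneg hμ.le (by linarith : (0:ℝ) ≤ B + β)) hfac]
    · have habs : |χ - B| = χ - B := abs_of_pos (by linarith)
      rw [habs]
      rcases le_or_gt χ (B + β) with hσ | hσ
      · refine hA.trans ?_
        have hfac : (0:ℝ) ≤ (χ - B - β) ^ 2 / (4 * β) := div_nonneg (sq_nonneg _) (by linarith)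
        nlinarith [mul_nonneg (mul_nonneg hμ.le (by linarith : (0:ℝ) ≤ B + β)) hfac]
      · have hσ0 : 0 < B + β := by linarith
        have hmem : μ * (B + β) * (1 + (χ - (B + β)) ^ 2 / (4 * (B + β))) ∈ T :=
          ⟨B + β, hσ0, hσ, rfl⟩
        refine (csInf_le hTbdd hmem).trans ?_
        have h1 : (χ - (B + β)) ^ 2 = (χ - B - β) ^ 2 := by ring
        rw [h1]
        have key : (χ - B - β) ^ 2 / (4 * (B + β)) ≤ (χ - B - β) ^ 2 / (4 * β) := by
          apply div_le_div_of_nonneg_left (sq_nonneg _) (by linarith) (by linarith)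
        nlinarith [mul_le_mul_of_nonneg_left key
          (show (0:ℝ) ≤ μ * (B + β) by positivity)]
end
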